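/- Let g ∈ ℝ^d with g ≠ 0, H ∈ ℝ^{d×d} symmetric with ‖H‖ ≤ K_H, σ > 0, and define m(s) = ⟨g, s⟩ + (1/2)⟨s, H s⟩ + (σ/3)‖s‖³. Let s^C = -α g where α minimizes α̂ ↦ m(-α̂ g) over α̂ ≥ 0. Then ‖s^C‖ ≥ (1/(2σ))(√(K_H² + 4σ‖g‖) - K_H). -/

import Mathlib

open scoped InnerProductSpace

/-- Lower bound on the length of the Cauchy step for the cubic-regularized model. -/
theorem cubic_cauchy_step_length {d : ℕ}
    (g : EuclideanSpace ℝ (Fin d)) (hg : g ≠ 0)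
    (H : EuclideanSpace ℝ (Fin d) →L[ℝ] EuclideanSpace ℝ (Fin d))
    (hH : IsSelfAdjoint H) (K_H : ℝ) (hK : ‖H‖ ≤ K_H)
    (σ : ℝ) (hσ : 0 < σ)
    (m : EuclideanSpace ℝ (Fin d) → ℝ)
    (hm : ∀ s, m s = ⟪g, s⟫_ℝ + (1 / 2) * ⟪s, H s⟫_ℝ + σ / 3 * ‖s‖ ^ 3)
    (α : ℝ) (hα0 : 0 ≤ α)
    (hmin : ∀ β : ℝ, 0 ≤ β → m (-(α • g)) ≤ m (-(β • g))) :
    ‖α • g‖ ≥ (1 / (2 * σ)) * (Real.sqrt (K_H ^ 2 + 4 * σ * ‖g‖) - K_H) := by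
  set G : ℝ := ‖g‖ with hG
  have hGpos : 0 < G := norm_pos_iff.mpr hg
  have hK0 : 0 ≤ K_H := le_trans (norm_nonneg H) hK
  set c : ℝ := ⟪g, H g⟫_ℝ with hc
  have hcle : c ≤ K_H * G ^ 2 := by
    calc c ≤ ‖g‖ * ‖H g‖ := real_inner_le_norm g (H g)
    _ ≤ ‖g‖ * (‖H‖ * ‖g‖) := by
        exact mul_le_mul_of_nonneg_left (H.le_opNorm g) (norm_nonneg g)
    _ ≤ K_H * G ^ 2 := by
        rw [← hG]; nlinarith [hGpos]
  set S : ℝ := Real.sqrt (K_H ^ 2 + 4 * σ * G) with hS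
  have hSsq : S ^ 2 = K_H ^ 2 + 4 * σ * G := by
    rw [hS]; exact Real.sq_sqrt (by nlinarith)
  have hS0 : 0 ≤ S := Real.sqrt_nonneg _
  have hSK : K_H < S := by nlinarith
  set β₀ : ℝ := (S - K_H) / (2 * σ * G) with hβ₀
  have hβ₀pos : 0 < β₀ := by
    apply div_pos (by linarith) (by positivity)
  -- the key quadratic identity: σ*G*β₀^2 + K_H*β₀ - 1 = 0
  have hquad : σ * G * β₀ ^ 2 + K_H * β₀ - 1 = 0 := by
    have h2σG : (2 * σ * G) ≠ 0 := by positivity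
    rw [hβ₀]
    field_simp
    nlinarith [hSsq]
  -- f β = m (-(β • g)) for β ≥ 0
  set f : ℝ → ℝ := fun β => σ / 3 * G ^ 3 * β ^ 3 + c / 2 * β ^ 2 - G ^ 2 * β with hf
  have hmf : ∀ β : ℝ, 0 ≤ β → m (-(β • g)) = f β := by
    intro β hβ
    rw [hm]
    have h1 : ⟪g, -(β • g)⟫_ℝ = -(β * G ^ 2) := by
      rw [inner_neg_right, real_inner_smul_right, real_inner_self_eq_norm_sq]
    have h2 : ⟪-(β • g), H (-(β • g))⟫_ℝ = β ^ 2 * c := by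
      rw [map_neg, map_smul, inner_neg_neg, real_inner_smul_left, real_inner_smul_right]
      ring
    have h3 : ‖-(β • g)‖ = β * G := by
      rw [norm_neg, norm_smul, Real.norm_eq_abs, abs_of_nonneg hβ]
    rw [h1, h2, h3, hf]
    ring
  have hd : ∀ β : ℝ, HasDerivAt f (σ * G ^ 3 * β ^ 2 + c * β - G ^ 2) β := by
    intro β
    have h1 := ((hasDerivAt_pow 3 β).const_mul (σ / 3 * G ^ 3)).add
      ((hasDerivAt_pow 2 β).const_mul (c / 2))
    have h2 := h1.sub ((hasDerivAt_id β).const_mul (G ^ 2))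
    exact h2.congr_deriv (by ring)
  -- show α ≥ β₀ by contradiction
  have hαβ : β₀ ≤ α := by
    by_contra hlt
    push_neg at hlt
    have hanti : StrictAntiOn f (Set.Icc α β₀) := by
      apply strictAntiOn_of_deriv_neg (convex_Icc α β₀)
      · exact (Continuous.continuousOn (by
          have : Differentiable ℝ f := fun x => (hd x).differentiableAt
          exact this.continuous))
      · intro x hx
        rw [interior_Icc] at hx
        rw [(hd x).deriv]
        have hx0 : 0 ≤ x := le_trans hα0 (le_of_lt hx.1)
        have hxβ : x < β₀ := hx.2
        have hq : σ * G * x ^ 2 + K_H * x - 1 < 0 := by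
          have hpos : 0 < (β₀ - x) * (σ * G * (x + β₀) + K_H) := by
            apply mul_pos (by linarith)
            nlinarith [mul_pos hσ hGpos]
          nlinarith [hpos, hquad]
        have h5 : G ^ 2 * (σ * G * x ^ 2 + K_H * x - 1) < 0 :=
          mul_neg_of_pos_of_neg (by positivity) hq
        nlinarith [h5, mul_le_mul_of_nonneg_left hcle hx0]
    have h1 : f β₀ < f α :=
      hanti (Set.left_mem_Icc.mpr (le_of_lt hlt)) (Set.right_mem_Icc.mpr (le_of_lt hlt)) hlt
    have h2 : f α ≤ f β₀ := by
      rw [← hmf α hα0, ← hmf β₀ (le_of_lt hβ₀pos)]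
      exact hmin β₀ (le_of_lt hβ₀pos)
    linarith
  -- conclude
  have : ‖α • g‖ = α * G := by
    rw [norm_smul, Real.norm_eq_abs, abs_of_nonneg hα0, hG]
  rw [this]
  have : (1 / (2 * σ)) * (S - K_H) = β₀ * G := by
    rw [hβ₀]; field_simp
  rw [hS] at this
  rw [this]
  exact mul_le_mul_of_nonneg_right hαβ (le_of_lt hGpos)
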